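/- Let σ₁, σ₂, σ₃ ∈ Matrix (Fin 2) (Fin 2) ℂ be the Pauli matrices, and for r ∈ ℝ³ define ρ(r) := (1/2)(I₂ + r₁σ₁ + r₂σ₂ + r₃σ₃). Let a, b ∈ ℝ³, let {û₁,û₂,û₃} and {v̂₁,v̂₂,v̂₃} be orthonormal bases of ℝ³, let S₁,S₂,S₃ ≥ 0, and set T := Σⱼ Sⱼ ûⱼ v̂ⱼᵀ ∈ Matrix (Fin 3) (Fin 3) ℝ. Then, with ⊗ the Kronecker product, (1/4)(I₂⊗I₂ + Σⱼ aⱼ σⱼ⊗I₂ + Σⱼ bⱼ I₂⊗σⱼ + Σ_{j,k} T_{jk} σⱼ⊗σₖ) = Σⱼ (Sⱼ/2)(ρ(ûⱼ)⊗ρ(v̂ⱼ) + ρ(-ûⱼ)⊗ρ(-v̂ⱼ)) + (1/2)(‖a‖I₂ + Σⱼ aⱼσⱼ)⊗((1/2)I₂) + ((1/2)I₂)⊗(1/2)(‖b‖I₂ + Σⱼ bⱼσⱼ) + (1 - ‖a‖ - ‖b‖ - Σⱼ Sⱼ)·(1/4)(I₂⊗I₂). -/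
import Mathlib

open Kronecker
open scoped RealInnerProductSpace

noncomputable section

/-- The Pauli matrices `σ₁, σ₂, σ₃` (indexed here by `0, 1, 2`). -/
def pauli : Fin 3 → Matrix (Fin 2) (Fin 2) ℂ
  | 0 => !![0, 1; 1, 0]
  | 1 => !![0, -Complex.I; Complex.I, 0]
  | 2 => !![1, 0; 0, -1]

/-- The qubit state `ρ(r) = (1/2)(I₂ + r·σ)` with Bloch vector `r ∈ ℝ³`. -/
def qubitState (r : EuclideanSpace ℝ (Fin 3)) : Matrix (Fin 2) (Fin 2) ℂ :=
  (1 / 2 : ℂ) • ((1 : Matrix (Fin 2) (Fin 2) ℂ) + ∑ j, (r j : ℂ) • pauli j)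

private lemma kron_sum_left {l : Type*} (s : Finset l) (f : l → Matrix (Fin 2) (Fin 2) ℂ)
    (M : Matrix (Fin 2) (Fin 2) ℂ) :
    (∑ j ∈ s, f j) ⊗ₖ M = ∑ j ∈ s, f j ⊗ₖ M := by
  ext i k
  simp [Matrix.kroneckerMap_apply, Matrix.sum_apply, Finset.sum_mul]

private lemma kron_sum_right {l : Type*} (s : Finset l) (f : l → Matrix (Fin 2) (Fin 2) ℂ)
    (M : Matrix (Fin 2) (Fin 2) ℂ) :
    M ⊗ₖ (∑ j ∈ s, f j) = ∑ j ∈ s, M ⊗ₖ f j := by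
  ext i k
  simp [Matrix.kroneckerMap_apply, Matrix.sum_apply, Finset.mul_sum]

set_option maxHeartbeats 2000000 in
theorem stmt_10 (a b : EuclideanSpace ℝ (Fin 3))
    (u v : Fin 3 → EuclideanSpace ℝ (Fin 3))
    (hu : ∀ j k, ⟪u j, u k⟫ = if j = k then (1 : ℝ) else 0)
    (hv : ∀ j k, ⟪v j, v k⟫ = if j = k then (1 : ℝ) else 0)
    (S : Fin 3 → ℝ) (hS : ∀ j, 0 ≤ S j)
    (T : Matrix (Fin 3) (Fin 3) ℝ)
    (hT : ∀ j k, T j k = ∑ l, S l * u l j * v l k) :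
    (1 / 4 : ℂ) • (((1 : Matrix (Fin 2) (Fin 2) ℂ) ⊗ₖ 1)
        + ∑ j, (a j : ℂ) • (pauli j ⊗ₖ 1)
        + ∑ j, (b j : ℂ) • ((1 : Matrix (Fin 2) (Fin 2) ℂ) ⊗ₖ pauli j)
        + ∑ j, ∑ k, (T j k : ℂ) • (pauli j ⊗ₖ pauli k))
      = (∑ j, ((S j / 2 : ℝ) : ℂ) •
            (qubitState (u j) ⊗ₖ qubitState (v j)
              + qubitState (-u j) ⊗ₖ qubitState (-v j)))
        + ((1 / 2 : ℂ) • ((‖a‖ : ℂ) • (1 : Matrix (Fin 2) (Fin 2) ℂ)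
              + ∑ j, (a j : ℂ) • pauli j))
            ⊗ₖ ((1 / 2 : ℂ) • (1 : Matrix (Fin 2) (Fin 2) ℂ))
        + ((1 / 2 : ℂ) • (1 : Matrix (Fin 2) (Fin 2) ℂ))
            ⊗ₖ ((1 / 2 : ℂ) • ((‖b‖ : ℂ) • (1 : Matrix (Fin 2) (Fin 2) ℂ)
              + ∑ j, (b j : ℂ) • pauli j))
        + ((1 - ‖a‖ - ‖b‖ - ∑ j, S j : ℝ) : ℂ) •
            ((1 / 4 : ℂ) • ((1 : Matrix (Fin 2) (Fin 2) ℂ) ⊗ₖ 1)) := by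
  simp only [hT, qubitState, PiLp.neg_apply]
  push_cast
  simp only [Matrix.add_kronecker, Matrix.kronecker_add, kron_sum_left, kron_sum_right,
    Matrix.smul_kronecker, Matrix.kronecker_smul, smul_add, smul_smul, Fin.sum_univ_three]
  module
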